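/- Tail bound for a truncated Hankel operator: under ‖A^t‖₂ ≤ ψρ^t for all t ≥ 0 with 0 ≤ ρ < 1, the infinite Hankel matrix H_{d,∞} with blocks (CA^{d+i+j}B)_{i,j≥0} satisfies ‖H_{d,∞}‖₂ ≤ ψ³ ρ^d ‖C‖₂ ‖B‖₂ / (1 − ρ²). -/

import Mathlib

/-- Euclidean norm of a finite-dimensional real vector. -/
noncomputable def eNorm {ι : Type*} [Fintype ι] (v : ι → ℝ) : ℝ :=
  Real.sqrt (∑ i, v i ^ 2)

/-- Spectral (ℓ₂ operator) norm of a real matrix. -/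
noncomputable def specNorm {ι κ : Type*} [Fintype ι] [Fintype κ] (M : Matrix ι κ ℝ) : ℝ :=
  ⨆ v : {v : κ → ℝ // eNorm v ≤ 1}, eNorm (M.mulVec v.1)

section helpers
variable {ι κ : Type*} [Fintype ι] [Fintype κ]

lemma eNorm_nonneg (v : ι → ℝ) : 0 ≤ eNorm v := Real.sqrt_nonneg _

lemma eNorm_sq (v : ι → ℝ) : eNorm v ^ 2 = ∑ i, v i ^ 2 :=
  Real.sq_sqrt (Finset.sum_nonneg fun i _ => sq_nonneg _)

lemma eNorm_eq_norm (v : ι → ℝ) : eNorm v = ‖(WithLp.equiv 2 (ι → ℝ)).symm v‖ := by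
  rw [EuclideanSpace.norm_eq, eNorm]
  congr 1
  refine Finset.sum_congr rfl fun i _ => ?_
  rw [show ((WithLp.equiv 2 (ι → ℝ)).symm v).ofLp i = v i from rfl, Real.norm_eq_abs, sq_abs]

lemma eNorm_zero : eNorm (0 : ι → ℝ) = 0 := by simp [eNorm]

lemma eNorm_smul (c : ℝ) (v : ι → ℝ) : eNorm (c • v) = |c| * eNorm v := by
  rw [eNorm_eq_norm, eNorm_eq_norm]
  rw [show (WithLp.equiv 2 (ι → ℝ)).symm (c • v) = c • (WithLp.equiv 2 (ι → ℝ)).symm v from rfl]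
  rw [norm_smul, Real.norm_eq_abs]

lemma eNorm_sum_le {α : Type*} (s : Finset α) (f : α → ι → ℝ) :
    eNorm (∑ a ∈ s, f a) ≤ ∑ a ∈ s, eNorm (f a) := by
  simp only [eNorm_eq_norm]
  rw [show (WithLp.equiv 2 (ι → ℝ)).symm (∑ a ∈ s, f a)
      = ∑ a ∈ s, (WithLp.equiv 2 (ι → ℝ)).symm (f a) from WithLp.toLp_sum (p := 2) (s := s) (f := f)]
  exact norm_sum_le _ _

lemma eNorm_eq_zero {v : ι → ℝ} (h : eNorm v = 0) : v = 0 := by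
  have h2 : ∑ i, v i ^ 2 = 0 := by
    have := eNorm_sq v; rw [h] at this; simpa using this.symm
  funext i
  have := (Finset.sum_eq_zero_iff_of_nonneg (fun i _ => sq_nonneg (v i))).1 h2 i (by simp)
  exact pow_eq_zero_iff (by norm_num) |>.1 this

lemma eNorm_mulVec_le_frob (M : Matrix ι κ ℝ) (v : κ → ℝ) :
    eNorm (M.mulVec v) ≤ Real.sqrt (∑ i, ∑ j, M i j ^ 2) * eNorm v := by
  have key : eNorm (M.mulVec v) ^ 2 ≤ (∑ i, ∑ j, M i j ^ 2) * eNorm v ^ 2 := by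
    rw [eNorm_sq, eNorm_sq, Finset.sum_mul]
    refine Finset.sum_le_sum fun i _ => ?_
    exact Finset.sum_mul_sq_le_sq_mul_sq Finset.univ (fun j => M i j) v
  have h1 : 0 ≤ Real.sqrt (∑ i, ∑ j, M i j ^ 2) * eNorm v :=
    mul_nonneg (Real.sqrt_nonneg _) (eNorm_nonneg _)
  have h2 : (0:ℝ) ≤ ∑ i, ∑ j, M i j ^ 2 :=
    Finset.sum_nonneg fun i _ => Finset.sum_nonneg fun j _ => sq_nonneg _
  nlinarith [eNorm_nonneg (M.mulVec v), Real.sq_sqrt h2, Real.sqrt_nonneg (∑ i, ∑ j, M i j ^ 2)]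

instance : Nonempty {v : κ → ℝ // eNorm v ≤ 1} := ⟨⟨0, by rw [eNorm_zero]; norm_num⟩⟩

lemma specNorm_bdd (M : Matrix ι κ ℝ) :
    BddAbove (Set.range fun v : {v : κ → ℝ // eNorm v ≤ 1} => eNorm (M.mulVec v.1)) := by
  refine ⟨Real.sqrt (∑ i, ∑ j, M i j ^ 2), ?_⟩
  rintro x ⟨v, rfl⟩
  calc eNorm (M.mulVec v.1) ≤ Real.sqrt (∑ i, ∑ j, M i j ^ 2) * eNorm v.1 :=
        eNorm_mulVec_le_frob M v.1
    _ ≤ Real.sqrt (∑ i, ∑ j, M i j ^ 2) * 1 := by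
        exact mul_le_mul_of_nonneg_left v.2 (Real.sqrt_nonneg _)
    _ = _ := mul_one _

lemma specNorm_nonneg (M : Matrix ι κ ℝ) : 0 ≤ specNorm M := by
  have := le_ciSup (specNorm_bdd M) (⟨0, by rw [eNorm_zero]; norm_num⟩ :
    {v : κ → ℝ // eNorm v ≤ 1})
  simp only [Matrix.mulVec_zero, eNorm_zero] at this
  exact this

lemma specNorm_le {M : Matrix ι κ ℝ} {c : ℝ}
    (h : ∀ v : κ → ℝ, eNorm v ≤ 1 → eNorm (M.mulVec v) ≤ c) : specNorm M ≤ c :=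
  ciSup_le fun v => h v.1 v.2

lemma eNorm_mulVec_le (M : Matrix ι κ ℝ) (v : κ → ℝ) :
    eNorm (M.mulVec v) ≤ specNorm M * eNorm v := by
  rcases eq_or_lt_of_le (eNorm_nonneg v) with h | h
  · have hv : v = 0 := eNorm_eq_zero h.symm
    simp [hv, Matrix.mulVec_zero, eNorm_zero, ← h]
  · set c := (eNorm v)⁻¹ with hc
    have hc0 : 0 < c := inv_pos.2 h
    have hu : eNorm (c • v) = 1 := by
      rw [eNorm_smul, abs_of_pos hc0, hc, inv_mul_cancel₀ (ne_of_gt h)]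
    have hle := le_ciSup (specNorm_bdd M) (⟨c • v, le_of_eq hu⟩ : {v : κ → ℝ // eNorm v ≤ 1})
    simp only at hle
    rw [Matrix.mulVec_smul, eNorm_smul, abs_of_pos hc0] at hle
    calc eNorm (M.mulVec v) = eNorm v * (c * eNorm (M.mulVec v)) := by
          rw [← mul_assoc, hc, mul_inv_cancel₀ (ne_of_gt h), one_mul]
      _ ≤ eNorm v * specNorm M := by
          exact mul_le_mul_of_nonneg_left hle (le_of_lt h)
      _ = specNorm M * eNorm v := mul_comm _ _

lemma geom_le' (r : ℝ) (h0 : 0 ≤ r) (h1 : r < 1) (N : ℕ) :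
    ∑ i ∈ Finset.range N, r ^ i ≤ 1 / (1 - r) := by
  rw [le_div_iff₀ (by linarith)]
  have := geom_sum_mul r N
  have hrN : 0 ≤ r ^ N := pow_nonneg h0 N
  nlinarith

lemma mulVec_sum' {α : Type*} (s : Finset α) (M : Matrix ι κ ℝ) (f : α → κ → ℝ) :
    M.mulVec (∑ a ∈ s, f a) = ∑ a ∈ s, M.mulVec (f a) := by
  have := map_sum M.mulVecLin f s
  simpa only [Matrix.mulVecLin_apply] using this

end helpers

/-- Every `N × N` block truncation of the Hankel operator `H_{d,∞}` with blocks
`C A^{d+i+j} B` obeys the spectral norm bound, which is equivalent to the bound on the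
operator norm of `H_{d,∞}` itself. -/
theorem stmt17 {n m r : ℕ} (A : Matrix (Fin n) (Fin n) ℝ)
    (B : Matrix (Fin n) (Fin m) ℝ) (C : Matrix (Fin r) (Fin n) ℝ)
    (ψ ρ : ℝ) (hψ : 0 < ψ) (hρ0 : 0 ≤ ρ) (hρ1 : ρ < 1)
    (hA : ∀ t : ℕ, specNorm (A ^ t) ≤ ψ * ρ ^ t) (d N : ℕ) :
    specNorm (Matrix.of fun (pq : Fin N × Fin r) (ij : Fin N × Fin m) =>
        (C * A ^ (d + pq.1.1 + ij.1.1) * B) pq.2 ij.2) ≤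
      ψ ^ 3 * ρ ^ d * specNorm C * specNorm B / (1 - ρ ^ 2) := by
  have hρ2 : (0:ℝ) < 1 - ρ ^ 2 := by nlinarith
  have hC : 0 ≤ specNorm C := specNorm_nonneg C
  have hB : 0 ≤ specNorm B := specNorm_nonneg B
  have hR0 : 0 ≤ ψ ^ 3 * ρ ^ d * specNorm C * specNorm B / (1 - ρ ^ 2) := by
    apply div_nonneg _ hρ2.le
    have := pow_nonneg hρ0 d
    have := pow_nonneg hψ.le 3
    positivity
  by_cases hn : n = 0
  · subst hn
    refine le_trans (specNorm_le fun v _ => ?_) hR0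
    have hzero : (Matrix.of fun (pq : Fin N × Fin r) (ij : Fin N × Fin m) =>
        (C * A ^ (d + pq.1.1 + ij.1.1) * B) pq.2 ij.2) = 0 := by
      ext ⟨i, p⟩ ⟨j, q⟩
      simp [Matrix.mul_apply]
    rw [hzero, Matrix.zero_mulVec, eNorm_zero]
  -- main case : n > 0, so ψ ≥ 1
  have hψ1 : 1 ≤ ψ := by
    have hpos : 0 < n := Nat.pos_of_ne_zero hn
    let e : Fin n → ℝ := Pi.single ⟨0, hpos⟩ 1
    have he : eNorm e = 1 := by
      rw [eNorm]
      rw [show ∑ i, e i ^ 2 = 1 by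
        simp [e, Pi.single_apply]]
      exact Real.sqrt_one
    have h1 : eNorm ((A ^ 0).mulVec e) = 1 := by
      rw [pow_zero, Matrix.one_mulVec, he]
    have hle := le_ciSup (specNorm_bdd (A ^ 0)) (⟨e, he.le⟩ : {v : Fin n → ℝ // eNorm v ≤ 1})
    simp only at hle
    rw [h1] at hle
    have h2 : specNorm (A ^ 0) ≤ ψ := by simpa using hA 0
    exact le_trans hle h2
  set s := Real.sqrt (1 / (1 - ρ ^ 2)) with hs
  have hs0 : 0 ≤ s := Real.sqrt_nonneg _
  have hs2 : s ^ 2 = 1 / (1 - ρ ^ 2) := Real.sq_sqrt (by positivity)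
  apply specNorm_le
  intro v hv
  set H : Matrix (Fin N × Fin r) (Fin N × Fin m) ℝ :=
    Matrix.of fun (pq : Fin N × Fin r) (ij : Fin N × Fin m) =>
      (C * A ^ (d + pq.1.1 + ij.1.1) * B) pq.2 ij.2 with hHdef
  set vj : Fin N → Fin m → ℝ := fun j q => v (j, q) with hvj
  set w : Fin n → ℝ := ∑ j : Fin N, ((A ^ (j : ℕ)) * B).mulVec (vj j) with hwdef
  have hw0 : 0 ≤ eNorm w := eNorm_nonneg _
  -- factorization of the mulVec
  have hHv : H.mulVec v = fun ip : Fin N × Fin r =>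
      ((C * A ^ (d + ip.1.1)).mulVec w) ip.2 := by
    funext ip
    obtain ⟨i, p⟩ := ip
    have hw' : (C * A ^ (d + i.1)).mulVec w
        = ∑ j : Fin N, (C * A ^ (d + i.1) * (A ^ (j : ℕ) * B)).mulVec (vj j) := by
      rw [hwdef, mulVec_sum']
      exact Finset.sum_congr rfl fun j _ => by rw [Matrix.mulVec_mulVec]
    show (H.mulVec v) (i, p) = ((C * A ^ (d + i.1)).mulVec w) p
    rw [hw', Finset.sum_apply]
    simp only [Matrix.mulVec, dotProduct]
    rw [Fintype.sum_prod_type]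
    refine Finset.sum_congr rfl fun j _ => ?_
    have hpow : C * A ^ (d + i.1) * (A ^ (j : ℕ) * B) = C * A ^ (d + i.1 + j.1) * B := by
      simp only [pow_add, Matrix.mul_assoc]
    rw [hpow]
    rfl
  -- the per-row bound
  have hterm : ∀ i : Fin N, eNorm ((C * A ^ (d + i.1)).mulVec w)
      ≤ specNorm C * ψ * eNorm w * ρ ^ d * ρ ^ (i : ℕ) := by
    intro i
    rw [← Matrix.mulVec_mulVec]
    calc eNorm (C.mulVec ((A ^ (d + i.1)).mulVec w))
        ≤ specNorm C * eNorm ((A ^ (d + i.1)).mulVec w) := eNorm_mulVec_le _ _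
      _ ≤ specNorm C * (specNorm (A ^ (d + i.1)) * eNorm w) :=
          mul_le_mul_of_nonneg_left (eNorm_mulVec_le _ _) hC
      _ ≤ specNorm C * ((ψ * ρ ^ (d + i.1)) * eNorm w) := by
          refine mul_le_mul_of_nonneg_left ?_ hC
          exact mul_le_mul_of_nonneg_right (hA _) hw0
      _ = specNorm C * ψ * eNorm w * ρ ^ d * ρ ^ (i : ℕ) := by
          rw [pow_add]; ring
  set K := specNorm C * ψ * eNorm w with hK
  have hK0 : 0 ≤ K := mul_nonneg (mul_nonneg hC hψ.le) hw0
  have hKρ0 : 0 ≤ K * ρ ^ d := mul_nonneg hK0 (pow_nonneg hρ0 d)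
  have hgeo : ∑ i : Fin N, (ρ ^ 2) ^ (i : ℕ) ≤ 1 / (1 - ρ ^ 2) := by
    rw [Fin.sum_univ_eq_sum_range]
    exact geom_le' (ρ ^ 2) (by positivity) (by nlinarith) N
  have hsum : ∑ i : Fin N, eNorm ((C * A ^ (d + i.1)).mulVec w) ^ 2
      ≤ (K * ρ ^ d) ^ 2 * (1 / (1 - ρ ^ 2)) := by
    calc ∑ i : Fin N, eNorm ((C * A ^ (d + i.1)).mulVec w) ^ 2
        ≤ ∑ i : Fin N, (K * ρ ^ d * ρ ^ (i : ℕ)) ^ 2 :=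
          Finset.sum_le_sum fun i _ => pow_le_pow_left₀ (eNorm_nonneg _) (hterm i) 2
      _ = (K * ρ ^ d) ^ 2 * ∑ i : Fin N, (ρ ^ 2) ^ (i : ℕ) := by
          rw [Finset.mul_sum]
          refine Finset.sum_congr rfl fun i _ => ?_
          rw [mul_pow, pow_right_comm]
      _ ≤ (K * ρ ^ d) ^ 2 * (1 / (1 - ρ ^ 2)) :=
          mul_le_mul_of_nonneg_left hgeo (sq_nonneg _)
  have h2 : eNorm (H.mulVec v) ≤ K * ρ ^ d * s := by
    have h1 : eNorm (H.mulVec v)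
        = Real.sqrt (∑ i : Fin N, eNorm ((C * A ^ (d + i.1)).mulVec w) ^ 2) := by
      rw [hHv, eNorm]
      congr 1
      rw [Fintype.sum_prod_type]
      exact Finset.sum_congr rfl fun i _ => (eNorm_sq _).symm
    rw [h1]
    calc Real.sqrt (∑ i : Fin N, eNorm ((C * A ^ (d + i.1)).mulVec w) ^ 2)
        ≤ Real.sqrt ((K * ρ ^ d) ^ 2 * (1 / (1 - ρ ^ 2))) := Real.sqrt_le_sqrt hsum
      _ = K * ρ ^ d * s := by
          rw [Real.sqrt_mul (sq_nonneg _), Real.sqrt_sq hKρ0, hs]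
  -- bound on eNorm w
  have hwj : ∀ j : Fin N, eNorm (((A ^ (j : ℕ)) * B).mulVec (vj j))
      ≤ ψ * specNorm B * (ρ ^ (j : ℕ) * eNorm (vj j)) := by
    intro j
    rw [← Matrix.mulVec_mulVec]
    calc eNorm ((A ^ (j : ℕ)).mulVec (B.mulVec (vj j)))
        ≤ specNorm (A ^ (j : ℕ)) * eNorm (B.mulVec (vj j)) := eNorm_mulVec_le _ _
      _ ≤ (ψ * ρ ^ (j : ℕ)) * (specNorm B * eNorm (vj j)) := by
          refine mul_le_mul (hA _) (eNorm_mulVec_le _ _) (eNorm_nonneg _) ?_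
          exact mul_nonneg hψ.le (pow_nonneg hρ0 _)
      _ = ψ * specNorm B * (ρ ^ (j : ℕ) * eNorm (vj j)) := by ring
  have hCS : ∑ j : Fin N, ρ ^ (j : ℕ) * eNorm (vj j) ≤ s := by
    have hcs2 := Finset.sum_mul_sq_le_sq_mul_sq Finset.univ
      (fun j : Fin N => ρ ^ (j : ℕ)) (fun j => eNorm (vj j))
    have hvsum : ∑ j : Fin N, eNorm (vj j) ^ 2 = eNorm v ^ 2 := by
      rw [eNorm_sq, Fintype.sum_prod_type]
      exact Finset.sum_congr rfl fun j _ => eNorm_sq (vj j)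
    have hg : ∑ j : Fin N, (ρ ^ (j : ℕ)) ^ 2 ≤ 1 / (1 - ρ ^ 2) := by
      calc ∑ j : Fin N, (ρ ^ (j : ℕ)) ^ 2 = ∑ j : Fin N, (ρ ^ 2) ^ (j : ℕ) := by
            refine Finset.sum_congr rfl fun j _ => ?_
            rw [pow_right_comm]
        _ ≤ 1 / (1 - ρ ^ 2) := hgeo
    have hvle : eNorm v ^ 2 ≤ 1 := by nlinarith [eNorm_nonneg v]
    have hsumnn : 0 ≤ ∑ j : Fin N, ρ ^ (j : ℕ) * eNorm (vj j) :=
      Finset.sum_nonneg fun j _ => mul_nonneg (pow_nonneg hρ0 _) (eNorm_nonneg _)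
    have hvnn : 0 ≤ eNorm v ^ 2 := sq_nonneg _
    rw [← Real.sqrt_sq hsumnn, hs]
    apply Real.sqrt_le_sqrt
    calc (∑ j : Fin N, ρ ^ (j : ℕ) * eNorm (vj j)) ^ 2
        ≤ (∑ j : Fin N, (ρ ^ (j : ℕ)) ^ 2) * ∑ j : Fin N, eNorm (vj j) ^ 2 := hcs2
      _ ≤ (1 / (1 - ρ ^ 2)) * 1 := by
          rw [hvsum]
          refine mul_le_mul hg hvle hvnn (by positivity)
      _ = 1 / (1 - ρ ^ 2) := mul_one _
  have hw : eNorm w ≤ ψ * specNorm B * s := by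
    calc eNorm w ≤ ∑ j : Fin N, eNorm (((A ^ (j : ℕ)) * B).mulVec (vj j)) :=
          eNorm_sum_le _ _
      _ ≤ ∑ j : Fin N, ψ * specNorm B * (ρ ^ (j : ℕ) * eNorm (vj j)) :=
          Finset.sum_le_sum fun j _ => hwj j
      _ = ψ * specNorm B * ∑ j : Fin N, ρ ^ (j : ℕ) * eNorm (vj j) :=
          (Finset.mul_sum _ _ _).symm
      _ ≤ ψ * specNorm B * s :=
          mul_le_mul_of_nonneg_left hCS (mul_nonneg hψ.le hB)
  calc eNorm (H.mulVec v) ≤ K * ρ ^ d * s := h2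
    _ ≤ specNorm C * ψ * (ψ * specNorm B * s) * ρ ^ d * s := by
        have hKle : K ≤ specNorm C * ψ * (ψ * specNorm B * s) :=
          mul_le_mul_of_nonneg_left hw (mul_nonneg hC hψ.le)
        exact mul_le_mul_of_nonneg_right
          (mul_le_mul_of_nonneg_right hKle (pow_nonneg hρ0 d)) hs0
    _ = ψ ^ 2 * ρ ^ d * specNorm C * specNorm B * s ^ 2 := by ring
    _ = ψ ^ 2 * ρ ^ d * specNorm C * specNorm B / (1 - ρ ^ 2) := by
        rw [hs2]; field_simp
    _ ≤ ψ ^ 3 * ρ ^ d * specNorm C * specNorm B / (1 - ρ ^ 2) := by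
        have hψ23 : ψ ^ 2 ≤ ψ ^ 3 := pow_le_pow_right₀ hψ1 (by norm_num)
        apply div_le_div_of_nonneg_right ?_ hρ2.le
        · exact mul_le_mul_of_nonneg_right
            (mul_le_mul_of_nonneg_right
              (mul_le_mul_of_nonneg_right hψ23 (pow_nonneg hρ0 d)) hC) hB
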